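/- Let F be a local field with uniformizer ϖ, G = GSp₄(F), K = GSp₄(O_F), and H = GL₂(F) ×_det GL₂(F) embedded in G via the two orthogonal planes spanned by (e₁,e₃) and (e₂,e₄). Let τ₁ = [[ϖ,0,0,1],[0,ϖ,1,0],[0,0,1,0],[0,0,0,1]] and U = H ∩ K. Then H ∩ τ₁Kτ₁⁻¹ equals X°·J, where X° is the image of GL₂(O_F) under the twisted diagonal embedding h ↦ (h, s h s) with s = [[0,1],[1,0]], and J is the subgroup of H ∩ τ₁Kτ₁⁻¹ whose reduction mod ϖ lies in the diagonal torus. Moreover H ∩ τ₁Kτ₁⁻¹ is a proper subgroup of U, and consequently HK and Hτ₁K are disjoint. -/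

import Mathlib

open scoped Pointwise

noncomputable section GSp4Setup

variable {F : Type*} [Field F]

/-- The standard symplectic matrix `J₄ = [[0, 1₂], [−1₂, 0]]`. -/
def Jsp : Matrix (Fin 4) (Fin 4) F :=
  !![0, 0, 1, 0; 0, 0, 0, 1; -1, 0, 0, 0; 0, -1, 0, 0]

/-- The block-wise embedding `GL₂ ×_det GL₂ → GSp₄` via the planes `(e₁,e₃)` and `(e₂,e₄)`. -/
def embedPair (A B : Matrix (Fin 2) (Fin 2) F) : Matrix (Fin 4) (Fin 4) F :=
  !![A 0 0, 0, A 0 1, 0;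
     0, B 0 0, 0, B 0 1;
     A 1 0, 0, A 1 1, 0;
     0, B 1 0, 0, B 1 1]

/-- The symplectic similitude group `GSp₄(F)` as a set of matrices. -/
def GSpSet (F : Type*) [Field F] : Set (Matrix (Fin 4) (Fin 4) F) :=
  {g | ∃ c : F, c ≠ 0 ∧ g.transpose * Jsp * g = c • Jsp}

/-- The subgroup `H = GL₂ ×_det GL₂` of `GSp₄(F)` as a set of matrices. -/
def HSet (F : Type*) [Field F] : Set (Matrix (Fin 4) (Fin 4) F) :=
  {m | ∃ A B : Matrix (Fin 2) (Fin 2) F, A.det = B.det ∧ A.det ≠ 0 ∧ m = embedPair A B}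

/-- `K = GSp₄(O_F)`: integral symplectic similitude matrices with unit determinant. -/
def KSet (F : Type*) [Field F] (v : Valuation F (WithZero (Multiplicative ℤ))) :
    Set (Matrix (Fin 4) (Fin 4) F) :=
  {g | g ∈ GSpSet F ∧ (∀ i j, v (g i j) ≤ 1) ∧ v g.det = 1}

/-- The element `τ₁`. -/
def tauOne (ϖ : F) : Matrix (Fin 4) (Fin 4) F :=
  !![ϖ, 0, 0, 1; 0, ϖ, 1, 0; 0, 0, 1, 0; 0, 0, 0, 1]

end GSp4Setup

noncomputable section GSp4Aux

open Matrix

variable {F : Type*} [Field F]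

/-- In `WithZero (Multiplicative ℤ)`, a square root of `1` is `1`. -/
theorem GSp4.wz_sq_eq_one {x : WithZero (Multiplicative ℤ)} (h : x * x = 1) : x = 1 := by
  rcases lt_trichotomy x 1 with h1 | h1 | h1
  · have h2 : x * x ≤ x * 1 := mul_le_mul_right h1.le x
    rw [mul_one] at h2
    exact absurd h (ne_of_lt (lt_of_le_of_lt h2 h1))
  · exact h1
  · have h2 : x * 1 ≤ x * x := mul_le_mul_right h1.le x
    rw [mul_one] at h2
    exact absurd h (ne_of_gt (lt_of_lt_of_le h1 h2))

theorem GSp4.wz_pow4_eq_one {x : WithZero (Multiplicative ℤ)} (h : x * x * (x * x) = 1) :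
    x = 1 :=
  GSp4.wz_sq_eq_one (GSp4.wz_sq_eq_one h)

theorem GSp4.pi_le_one :
    ((Multiplicative.ofAdd (-1 : ℤ) : Multiplicative ℤ) : WithZero (Multiplicative ℤ)) ≤ 1 := by
  rw [show (1 : WithZero (Multiplicative ℤ)) = ((1 : Multiplicative ℤ) : WithZero _) from rfl,
    WithZero.coe_le_coe]
  decide

theorem GSp4.not_one_le_pi :
    ¬ ((1 : WithZero (Multiplicative ℤ)) ≤
      ((Multiplicative.ofAdd (-1 : ℤ) : Multiplicative ℤ) : WithZero (Multiplicative ℤ))) := by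
  rw [show (1 : WithZero (Multiplicative ℤ)) = ((1 : Multiplicative ℤ) : WithZero _) from rfl,
    WithZero.coe_le_coe]
  decide

theorem GSp4.pi_ne_zero :
    ((Multiplicative.ofAdd (-1 : ℤ) : Multiplicative ℤ) : WithZero (Multiplicative ℤ)) ≠ 0 :=
  WithZero.coe_ne_zero

theorem GSp4.pi_sq_not_le :
    ¬ ((((Multiplicative.ofAdd (-1 : ℤ) : Multiplicative ℤ) : WithZero (Multiplicative ℤ)) *
        ((Multiplicative.ofAdd (-1 : ℤ) : Multiplicative ℤ) : WithZero (Multiplicative ℤ))) ≤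
      (((Multiplicative.ofAdd (-1 : ℤ) : Multiplicative ℤ) : WithZero (Multiplicative ℤ)) *
        ((Multiplicative.ofAdd (-1 : ℤ) : Multiplicative ℤ) : WithZero (Multiplicative ℤ))) *
      ((((Multiplicative.ofAdd (-1 : ℤ) : Multiplicative ℤ) : WithZero (Multiplicative ℤ)) *
        ((Multiplicative.ofAdd (-1 : ℤ) : Multiplicative ℤ) : WithZero (Multiplicative ℤ))))) := by
  simp only [← WithZero.coe_mul, WithZero.coe_le_coe]
  decide

theorem GSp4.embedPair_mul (A B A' B' : Matrix (Fin 2) (Fin 2) F) :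
    embedPair A B * embedPair A' B' = embedPair (A * A') (B * B') := by
  ext i j
  fin_cases i <;> fin_cases j <;>
    (simp [embedPair, Matrix.mul_apply, Fin.sum_univ_four, Fin.sum_univ_two,
      Matrix.vecHead, Matrix.vecTail, Function.comp] <;> rfl)

theorem GSp4.embedPair_one : embedPair (1 : Matrix (Fin 2) (Fin 2) F) 1 = 1 := by
  ext i j
  fin_cases i <;> fin_cases j <;>
    (simp [embedPair, Matrix.one_apply, Matrix.vecHead, Matrix.vecTail] <;> rfl)

theorem GSp4.det_embedPair (A B : Matrix (Fin 2) (Fin 2) F) :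
    (embedPair A B).det = A.det * B.det := by
  simp [embedPair, Matrix.det_succ_row_zero, Fin.sum_univ_succ, Matrix.det_fin_two,
    Fin.succAbove, Matrix.vecHead, Matrix.vecTail]
  ring

theorem GSp4.embed_J (A B : Matrix (Fin 2) (Fin 2) F) (h : A.det = B.det) :
    (embedPair A B)ᵀ * Jsp * embedPair A B = A.det • Jsp := by
  ext i j
  fin_cases i <;> fin_cases j <;>
    simp [embedPair, Jsp, Matrix.mul_apply, Fin.sum_univ_four, Matrix.det_fin_two,
      Matrix.vecHead, Matrix.vecTail] <;>
    first
      | rfl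
      | linear_combination Matrix.det_fin_two A - Matrix.det_fin_two B - h
      | linear_combination Matrix.det_fin_two B - Matrix.det_fin_two A + h
      | ring

theorem GSp4.tau_J (ϖ : F) : (tauOne ϖ)ᵀ * Jsp * tauOne ϖ = ϖ • Jsp := by
  ext i j
  fin_cases i <;> fin_cases j <;>
    simp [tauOne, Jsp, Matrix.mul_apply, Fin.sum_univ_four, Matrix.vecHead, Matrix.vecTail]

theorem GSp4.det_tau (ϖ : F) : (tauOne ϖ).det = ϖ * ϖ := by
  simp [tauOne, Matrix.det_succ_row_zero, Fin.sum_univ_succ, Fin.succAbove,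
    Matrix.vecHead, Matrix.vecTail]

theorem GSp4.det_Jsp : (Jsp : Matrix (Fin 4) (Fin 4) F).det = 1 := by
  simp [Jsp, Matrix.det_succ_row_zero, Fin.sum_univ_succ, Fin.succAbove,
    Matrix.vecHead, Matrix.vecTail]

theorem GSp4.Jsp_sq : (Jsp : Matrix (Fin 4) (Fin 4) F) * Jsp = -1 := by
  ext i j
  fin_cases i <;> fin_cases j <;>
    simp [Jsp, Matrix.mul_apply, Fin.sum_univ_four, Matrix.one_apply,
      Matrix.vecHead, Matrix.vecTail]

end GSp4Aux

noncomputable section GSp4Aux2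

open Matrix

variable {F : Type*} [Field F] (v : Valuation F (WithZero (Multiplicative ℤ)))

/-- The congruence/integrality conditions cutting out `H ∩ τ₁Kτ₁⁻¹`. -/
def GSp4.SCond (ϖ : F) (A B : Matrix (Fin 2) (Fin 2) F) : Prop :=
  (∀ i j, v (A i j) ≤ 1) ∧ (∀ i j, v (B i j) ≤ 1) ∧ A.det = B.det ∧ v A.det = 1 ∧
  v (A 0 1 - B 1 0) ≤ v ϖ ∧ v (A 0 0 - B 1 1) ≤ v ϖ ∧
  v (B 0 0 - A 1 1) ≤ v ϖ ∧ v (B 0 1 - A 1 0) ≤ v ϖ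

theorem GSp4.ne_zero_of_v_eq_one {x : F} (hx : v x = 1) : x ≠ 0 := by
  intro h0
  rw [h0, map_zero] at hx
  exact zero_ne_one hx

theorem GSp4.v_add_le {x y : F} {g : WithZero (Multiplicative ℤ)}
    (hx : v x ≤ g) (hy : v y ≤ g) : v (x + y) ≤ g :=
  le_trans (v.map_add x y) (max_le hx hy)

theorem GSp4.v_sub_le {x y : F} {g : WithZero (Multiplicative ℤ)}
    (hx : v x ≤ g) (hy : v y ≤ g) : v (x - y) ≤ g :=
  le_trans (v.map_sub x y) (max_le hx hy)

theorem GSp4.v_mul_le {x y : F} {g : WithZero (Multiplicative ℤ)}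
    (hx : v x ≤ 1) (hy : v y ≤ g) : v (x * y) ≤ g := by
  rw [v.map_mul]
  calc v x * v y ≤ 1 * g := mul_le_mul' hx hy
    _ = g := one_mul g

theorem GSp4.v_mul_le_left {x y : F} (hy : v y ≤ 1) : v (x * y) ≤ v x := by
  rw [v.map_mul]; exact mul_le_of_le_one_right' hy

/-- Transfer of the similitude condition through `m τ = τ k`. -/
theorem GSp4.gsp_transfer {m k : Matrix (Fin 4) (Fin 4) F} {ϖ : F} (hϖ0 : ϖ ≠ 0) (c : F)
    (hm : mᵀ * Jsp * m = c • Jsp) (heq : m * tauOne ϖ = tauOne ϖ * k) :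
    kᵀ * Jsp * k = c • Jsp := by
  have h1 : (m * tauOne ϖ)ᵀ * Jsp * (m * tauOne ϖ) =
      (tauOne ϖ * k)ᵀ * Jsp * (tauOne ϖ * k) := by rw [heq]
  have h2 : (tauOne ϖ)ᵀ * (mᵀ * Jsp * m) * tauOne ϖ =
      kᵀ * ((tauOne ϖ)ᵀ * Jsp * tauOne ϖ) * k := by
    simpa only [Matrix.transpose_mul, Matrix.mul_assoc] using h1
  rw [hm, GSp4.tau_J] at h2
  have h3 : (c * ϖ) • (Jsp : Matrix (Fin 4) (Fin 4) F) = ϖ • (kᵀ * Jsp * k) := by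
    have e1 : (tauOne ϖ)ᵀ * (c • (Jsp : Matrix (Fin 4) (Fin 4) F)) * tauOne ϖ =
        (c * ϖ) • Jsp := by
      rw [Matrix.mul_smul, Matrix.smul_mul, GSp4.tau_J, smul_smul]
    have e2 : kᵀ * ((ϖ : F) • (Jsp : Matrix (Fin 4) (Fin 4) F)) * k =
        ϖ • (kᵀ * Jsp * k) := by
      rw [Matrix.mul_smul, Matrix.smul_mul]
    rw [← e1, h2, e2]
  have h4 := congrArg (fun M : Matrix (Fin 4) (Fin 4) F => ϖ⁻¹ • M) h3
  simp only [smul_smul] at h4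
  rw [inv_mul_cancel₀ hϖ0, one_smul] at h4
  rw [← h4]
  congr 1
  field_simp

/-- Transfer of determinants through `m τ = τ k`. -/
theorem GSp4.det_transfer {m k : Matrix (Fin 4) (Fin 4) F} {ϖ : F} (hϖ0 : ϖ ≠ 0)
    (heq : m * tauOne ϖ = tauOne ϖ * k) : m.det = k.det := by
  have h1 := congrArg Matrix.det heq
  rw [Matrix.det_mul, Matrix.det_mul, GSp4.det_tau] at h1
  have h2 : (ϖ * ϖ) * m.det = (ϖ * ϖ) * k.det := by linear_combination h1
  exact mul_left_cancel₀ (mul_ne_zero hϖ0 hϖ0) h2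

theorem GSp4.S_to {ϖ : F} (hϖ0 : ϖ ≠ 0) (hϖ1 : v ϖ ≤ 1)
    {A B k : _} (hdet : A.det = B.det) (hkK : k ∈ KSet F v)
    (heq : embedPair A B * tauOne ϖ = tauOne ϖ * k) : GSp4.SCond v ϖ A B := by
  obtain ⟨-, hint, hdetk⟩ := hkK
  have E : ∀ i j, (embedPair A B * tauOne ϖ) i j = (tauOne ϖ * k) i j := fun i j => by rw [heq]
  have e00 := E 0 0; have e01 := E 0 1; have e02 := E 0 2; have e03 := E 0 3
  have e10 := E 1 0; have e11 := E 1 1; have e12 := E 1 2; have e13 := E 1 3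
  have e20 := E 2 0; have e21 := E 2 1; have e22 := E 2 2; have e23 := E 2 3
  have e30 := E 3 0; have e31 := E 3 1; have e32 := E 3 2; have e33 := E 3 3
  simp [embedPair, tauOne, Matrix.mul_apply, Fin.sum_univ_four, Matrix.vecHead, Matrix.vecTail]
    at e00 e01 e02 e03 e10 e11 e12 e13 e20 e21 e22 e23 e30 e31 e32 e33
  -- identify the entries
  have ha00 : A 0 0 = k 0 0 :=
    mul_left_cancel₀ hϖ0 (by linear_combination e00 - e30)
  have hb10 : B 1 0 = -(k 0 1) :=
    mul_left_cancel₀ hϖ0 (by linear_combination e31 - e01)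
  have hc1 : A 0 1 - B 1 0 = ϖ * k 0 2 := by linear_combination e02 - e32
  have hc2 : A 0 0 - B 1 1 = ϖ * k 0 3 := by linear_combination e03 - e33
  have ha10 : A 1 0 = -(k 1 0) :=
    mul_left_cancel₀ hϖ0 (by linear_combination e20 - e10)
  have hb00 : B 0 0 = k 1 1 :=
    mul_left_cancel₀ hϖ0 (by linear_combination e11 - e21)
  have hc3 : B 0 0 - A 1 1 = ϖ * k 1 2 := by linear_combination e12 - e22
  have hc4 : B 0 1 - A 1 0 = ϖ * k 1 3 := by linear_combination e13 - e23
  -- valuation bounds for the entries of A and B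
  have hva00 : v (A 0 0) ≤ 1 := by rw [ha00]; exact hint 0 0
  have hvb10 : v (B 1 0) ≤ 1 := by rw [hb10, v.map_neg]; exact hint 0 1
  have hva10 : v (A 1 0) ≤ 1 := by rw [ha10, v.map_neg]; exact hint 1 0
  have hvb00 : v (B 0 0) ≤ 1 := by rw [hb00]; exact hint 1 1
  have hva11 : v (A 1 1) ≤ 1 := by rw [e22]; exact hint 2 2
  have hva01 : v (A 0 1) ≤ 1 := by
    rw [show A 0 1 = ϖ * k 0 2 + B 1 0 from by linear_combination hc1]
    exact GSp4.v_add_le v (GSp4.v_mul_le v hϖ1 (hint 0 2)) hvb10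
  have hvb11 : v (B 1 1) ≤ 1 := by rw [e33]; exact hint 3 3
  have hvb01 : v (B 0 1) ≤ 1 := by
    rw [show B 0 1 = ϖ * k 1 3 + A 1 0 from by linear_combination hc4]
    exact GSp4.v_add_le v (GSp4.v_mul_le v hϖ1 (hint 1 3)) hva10
  -- determinant
  have hdm : (embedPair A B).det = k.det := GSp4.det_transfer hϖ0 heq
  have hv2 : v A.det * v A.det = 1 := by
    rw [← v.map_mul, show A.det * A.det = k.det from by
      rw [← hdm, GSp4.det_embedPair, ← hdet]]
    exact hdetk
  have hvdet : v A.det = 1 := GSp4.wz_sq_eq_one hv2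
  refine ⟨?_, ?_, hdet, hvdet, ?_, ?_, ?_, ?_⟩
  · intro i j; fin_cases i <;> fin_cases j <;> assumption
  · intro i j; fin_cases i <;> fin_cases j <;> assumption
  · rw [hc1]; exact GSp4.v_mul_le_left v (hint 0 2)
  · rw [hc2]; exact GSp4.v_mul_le_left v (hint 0 3)
  · rw [hc3]; exact GSp4.v_mul_le_left v (hint 1 2)
  · rw [hc4]; exact GSp4.v_mul_le_left v (hint 1 3)

end GSp4Aux2

noncomputable section GSp4Aux3

open Matrix

variable {F : Type*} [Field F] (v : Valuation F (WithZero (Multiplicative ℤ)))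

theorem GSp4.S_from {ϖ : F} (hϖ0 : ϖ ≠ 0) (hϖ1 : v ϖ ≤ 1)
    {A B : Matrix (Fin 2) (Fin 2) F} (hc : GSp4.SCond v ϖ A B) :
    embedPair A B ∈ HSet F ∧
      ∃ k ∈ KSet F v, embedPair A B * tauOne ϖ = tauOne ϖ * k := by
  obtain ⟨hA, hB, hdet, hvdet, c1, c2, c3, c4⟩ := hc
  have hAne : A.det ≠ 0 := GSp4.ne_zero_of_v_eq_one v hvdet
  have hπpos : (0 : WithZero (Multiplicative ℤ)) < v ϖ := by
    rw [zero_lt_iff]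
    exact v.ne_zero_iff.mpr hϖ0
  set k : Matrix (Fin 4) (Fin 4) F :=
    !![A 0 0, -(B 1 0), (A 0 1 - B 1 0)/ϖ, (A 0 0 - B 1 1)/ϖ;
       -(A 1 0), B 0 0, (B 0 0 - A 1 1)/ϖ, (B 0 1 - A 1 0)/ϖ;
       A 1 0 * ϖ, 0, A 1 1, A 1 0;
       0, B 1 0 * ϖ, B 1 0, B 1 1] with hk
  have heq : embedPair A B * tauOne ϖ = tauOne ϖ * k := by
    ext i j
    fin_cases i <;> fin_cases j <;>
      (try simp [hk, embedPair, tauOne, Matrix.mul_apply, Fin.sum_univ_four,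
        Matrix.vecHead, Matrix.vecTail]) <;>
      (try field_simp) <;> (try ring)
  have hint : ∀ i j, v (k i j) ≤ 1 := by
    intro i j
    fin_cases i <;> fin_cases j
    · exact hA 0 0
    · show v (-(B 1 0)) ≤ 1
      rw [v.map_neg]; exact hB 1 0
    · show v ((A 0 1 - B 1 0)/ϖ) ≤ 1
      rw [map_div₀]; exact (div_le_one₀ hπpos).mpr c1
    · show v ((A 0 0 - B 1 1)/ϖ) ≤ 1
      rw [map_div₀]; exact (div_le_one₀ hπpos).mpr c2
    · show v (-(A 1 0)) ≤ 1
      rw [v.map_neg]; exact hA 1 0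
    · exact hB 0 0
    · show v ((B 0 0 - A 1 1)/ϖ) ≤ 1
      rw [map_div₀]; exact (div_le_one₀ hπpos).mpr c3
    · show v ((B 0 1 - A 1 0)/ϖ) ≤ 1
      rw [map_div₀]; exact (div_le_one₀ hπpos).mpr c4
    · show v (A 1 0 * ϖ) ≤ 1
      rw [v.map_mul]; exact mul_le_one' (hA 1 0) hϖ1
    · show v (0 : F) ≤ 1
      rw [v.map_zero]; exact zero_le'
    · exact hA 1 1
    · exact hA 1 0
    · show v (0 : F) ≤ 1
      rw [v.map_zero]; exact zero_le'
    · show v (B 1 0 * ϖ) ≤ 1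
      rw [v.map_mul]; exact mul_le_one' (hB 1 0) hϖ1
    · exact hB 1 0
    · exact hB 1 1
  have hdetk : v k.det = 1 := by
    have hdm : (embedPair A B).det = k.det := GSp4.det_transfer hϖ0 heq
    rw [← hdm, GSp4.det_embedPair, ← hdet, v.map_mul, hvdet, one_mul]
  exact ⟨⟨A, B, hdet, hAne, rfl⟩,
    k, ⟨⟨A.det, hAne, GSp4.gsp_transfer hϖ0 A.det (GSp4.embed_J A B hdet) heq⟩, hint, hdetk⟩, heq⟩

end GSp4Aux3

noncomputable section GSp4Aux4

open Matrix

variable {F : Type*} [Field F] (v : Valuation F (WithZero (Multiplicative ℤ)))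

theorem GSp4.v_mul_le_one {x y : F} (hx : v x ≤ 1) (hy : v y ≤ 1) : v (x * y) ≤ 1 := by
  rw [v.map_mul]; exact mul_le_one' hx hy

theorem GSp4.K_mul {k k' : Matrix (Fin 4) (Fin 4) F}
    (hk : k ∈ KSet F v) (hk' : k' ∈ KSet F v) : k * k' ∈ KSet F v := by
  obtain ⟨⟨c, hc0, hc⟩, hint, hdetv⟩ := hk
  obtain ⟨⟨c', hc'0, hc'⟩, hint', hdetv'⟩ := hk'
  refine ⟨⟨c * c', mul_ne_zero hc0 hc'0, ?_⟩, ?_, ?_⟩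
  · calc (k * k')ᵀ * Jsp * (k * k')
        = k'ᵀ * (kᵀ * Jsp * k) * k' := by simp only [Matrix.transpose_mul, Matrix.mul_assoc]
      _ = k'ᵀ * (c • Jsp) * k' := by rw [hc]
      _ = c • (k'ᵀ * Jsp * k') := by rw [Matrix.mul_smul, Matrix.smul_mul]
      _ = c • (c' • Jsp) := by rw [hc']
      _ = (c * c') • Jsp := by rw [smul_smul]
  · intro i j
    rw [Matrix.mul_apply, Fin.sum_univ_four]
    exact GSp4.v_add_le v (GSp4.v_add_le v (GSp4.v_add_le v
      (GSp4.v_mul_le_one v (hint i 0) (hint' 0 j))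
      (GSp4.v_mul_le_one v (hint i 1) (hint' 1 j)))
      (GSp4.v_mul_le_one v (hint i 2) (hint' 2 j)))
      (GSp4.v_mul_le_one v (hint i 3) (hint' 3 j))
  · rw [Matrix.det_mul, v.map_mul, hdetv, hdetv', one_mul]

theorem GSp4.K_inv {k : Matrix (Fin 4) (Fin 4) F} (hk : k ∈ KSet F v) :
    ∃ k', k' ∈ KSet F v ∧ k * k' = 1 ∧ k' * k = 1 := by
  obtain ⟨⟨c, hc0, hc⟩, hint, hdetv⟩ := hk
  -- determinant relation
  have hdc := congrArg Matrix.det hc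
  rw [Matrix.det_mul, Matrix.det_mul, Matrix.det_transpose, Matrix.det_smul, GSp4.det_Jsp] at hdc
  simp only [Fintype.card_fin, mul_one] at hdc
  -- hdc : k.det * k.det = c ^ 4
  have hvc : v c = 1 := by
    refine GSp4.wz_pow4_eq_one ?_
    calc v c * v c * (v c * v c) = v (c * c * (c * c)) := by
          simp only [v.map_mul]
      _ = v (k.det * k.det) := by
          rw [show c * c * (c * c) = k.det * k.det from by linear_combination -hdc]
      _ = 1 := by rw [v.map_mul, hdetv, one_mul]
  set kinv : Matrix (Fin 4) (Fin 4) F := c⁻¹ • ((-Jsp) * kᵀ * Jsp) with hkinv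
  have hleft : kinv * k = 1 := by
    calc kinv * k = c⁻¹ • ((-Jsp) * kᵀ * Jsp * k) := Matrix.smul_mul _ _ _
      _ = c⁻¹ • ((-Jsp) * (kᵀ * Jsp * k)) := by simp only [Matrix.mul_assoc]
      _ = c⁻¹ • ((-Jsp) * (c • Jsp)) := by rw [hc]
      _ = c⁻¹ • (c • ((-Jsp) * Jsp)) := by rw [Matrix.mul_smul]
      _ = c⁻¹ • (c • (1 : Matrix (Fin 4) (Fin 4) F)) := by
          rw [Matrix.neg_mul, GSp4.Jsp_sq, neg_neg]
      _ = 1 := by rw [smul_smul, inv_mul_cancel₀ hc0, one_smul]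
  have hright : k * kinv = 1 := mul_eq_one_comm.mp hleft
  clear_value kinv
  have hJ : kinvᵀ * Jsp * kinv = c⁻¹ • Jsp := by
    have h6 : (k * kinv)ᵀ * Jsp * (k * kinv) = c • (kinvᵀ * Jsp * kinv) := by
      calc (k * kinv)ᵀ * Jsp * (k * kinv)
          = kinvᵀ * (kᵀ * Jsp * k) * kinv := by
            simp only [Matrix.transpose_mul, Matrix.mul_assoc]
        _ = kinvᵀ * (c • Jsp) * kinv := by rw [hc]
        _ = c • (kinvᵀ * Jsp * kinv) := by rw [Matrix.mul_smul, Matrix.smul_mul]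
    rw [hright] at h6
    simp only [Matrix.transpose_one, Matrix.one_mul, Matrix.mul_one] at h6
    have h7 := congrArg (fun M : Matrix (Fin 4) (Fin 4) F => c⁻¹ • M) h6
    simp only [smul_smul] at h7
    rw [inv_mul_cancel₀ hc0, one_smul] at h7
    exact h7.symm
  have hintinv : ∀ i j, v (kinv i j) ≤ 1 := by
    intro i j
    rw [hkinv, Matrix.smul_apply, smul_eq_mul, v.map_mul, map_inv₀, hvc, inv_one, one_mul]
    fin_cases i <;> fin_cases j <;>
      (try simp [Jsp, Matrix.mul_apply, Matrix.vecMul, dotProduct, Fin.sum_univ_four,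
        Matrix.vecHead, Matrix.vecTail, Matrix.transpose_apply, v.map_neg]) <;>
      (first | exact hint _ _ | exact zero_le' | skip)
  have hdetinv : v kinv.det = 1 := by
    have h7 : kinv.det * k.det = 1 := by rw [← Matrix.det_mul, hleft, Matrix.det_one]
    have h8 := congrArg v h7
    rwa [v.map_mul, hdetv, mul_one, v.map_one] at h8
  exact ⟨kinv, ⟨⟨c⁻¹, inv_ne_zero hc0, hJ⟩, hintinv, hdetinv⟩, hright, hleft⟩

theorem GSp4.H_mul {m m' : Matrix (Fin 4) (Fin 4) F}
    (hm : m ∈ HSet F) (hm' : m' ∈ HSet F) : m * m' ∈ HSet F := by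
  obtain ⟨A, B, hd, hn, rfl⟩ := hm
  obtain ⟨A', B', hd', hn', rfl⟩ := hm'
  exact ⟨A * A', B * B', by rw [Matrix.det_mul, Matrix.det_mul, hd, hd'],
    by rw [Matrix.det_mul]; exact mul_ne_zero hn hn', by rw [GSp4.embedPair_mul]⟩

theorem GSp4.H_inv {m : Matrix (Fin 4) (Fin 4) F} (hm : m ∈ HSet F) :
    ∃ m', m' ∈ HSet F ∧ m' * m = 1 := by
  obtain ⟨A, B, hd, hn, rfl⟩ := hm
  have hBn : B.det ≠ 0 := by rw [← hd]; exact hn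
  have huA : IsUnit A.det := isUnit_iff_ne_zero.mpr hn
  have huB : IsUnit B.det := isUnit_iff_ne_zero.mpr hBn
  refine ⟨embedPair A⁻¹ B⁻¹, ⟨A⁻¹, B⁻¹, ?_, ?_, rfl⟩, ?_⟩
  · rw [Matrix.det_nonsing_inv, Matrix.det_nonsing_inv, hd]
  · rw [Matrix.det_nonsing_inv, Ring.inverse_eq_inv']
    exact inv_ne_zero hn
  · rw [GSp4.embedPair_mul, Matrix.nonsing_inv_mul A huA, Matrix.nonsing_inv_mul B huB,
      GSp4.embedPair_one]

theorem GSp4.S_mul {ϖ : F} {m m' : Matrix (Fin 4) (Fin 4) F}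
    (hm : m ∈ HSet F ∧ ∃ k ∈ KSet F v, m * tauOne ϖ = tauOne ϖ * k)
    (hm' : m' ∈ HSet F ∧ ∃ k ∈ KSet F v, m' * tauOne ϖ = tauOne ϖ * k) :
    m * m' ∈ HSet F ∧ ∃ k ∈ KSet F v, (m * m') * tauOne ϖ = tauOne ϖ * k := by
  obtain ⟨hH, k, hkK, heq⟩ := hm
  obtain ⟨hH', k', hkK', heq'⟩ := hm'
  refine ⟨GSp4.H_mul hH hH', k * k', GSp4.K_mul v hkK hkK', ?_⟩
  calc m * m' * tauOne ϖ = m * (m' * tauOne ϖ) := by rw [Matrix.mul_assoc]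
    _ = m * (tauOne ϖ * k') := by rw [heq']
    _ = (m * tauOne ϖ) * k' := by rw [Matrix.mul_assoc]
    _ = tauOne ϖ * k * k' := by rw [heq]
    _ = tauOne ϖ * (k * k') := by rw [Matrix.mul_assoc]

/-- No element of `H` lies in `τ₁ K`. -/
theorem GSp4.not_H_tauK {ϖ : F}
    (hϖ : v ϖ = ((Multiplicative.ofAdd (-1 : ℤ) : Multiplicative ℤ) :
      WithZero (Multiplicative ℤ)))
    {m k : Matrix (Fin 4) (Fin 4) F} (hm : m ∈ HSet F) (hkK : k ∈ KSet F v)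
    (heq : m = tauOne ϖ * k) : False := by
  obtain ⟨A, B, hd, hn, hEm⟩ := hm
  obtain ⟨-, hint, hdetk⟩ := hkK
  rw [hEm] at heq
  have E : ∀ i j, embedPair A B i j = (tauOne ϖ * k) i j := fun i j => by rw [heq]
  have f00 := E 0 0; have f01 := E 0 1; have f02 := E 0 2; have f03 := E 0 3
  have f10 := E 1 0; have f11 := E 1 1; have f12 := E 1 2; have f13 := E 1 3
  have f20 := E 2 0; have f21 := E 2 1; have f22 := E 2 2; have f23 := E 2 3
  have f30 := E 3 0; have f31 := E 3 1; have f32 := E 3 2; have f33 := E 3 3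
  simp [embedPair, tauOne, Matrix.mul_apply, Fin.sum_univ_four, Matrix.vecHead, Matrix.vecTail]
    at f00 f01 f02 f03 f10 f11 f12 f13 f20 f21 f22 f23 f30 f31 f32 f33
  have g1 : A 0 0 = ϖ * k 0 0 := by linear_combination f00 - f30
  have g2 : A 0 1 = ϖ * k 0 2 := by linear_combination f02 - f32
  have g3 : A 1 0 = -(ϖ * k 1 0) := by linear_combination f20 - f10
  have g4 : A 1 1 = -(ϖ * k 1 2) := by linear_combination f22 - f12
  have g5 : B 0 0 = ϖ * k 1 1 := by linear_combination f11 - f21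
  have g6 : B 0 1 = ϖ * k 1 3 := by linear_combination f13 - f23
  have g7 : B 1 0 = -(ϖ * k 0 1) := by linear_combination f31 - f01
  have g8 : B 1 1 = -(ϖ * k 0 3) := by linear_combination f33 - f03
  have hva00 : v (A 0 0) ≤ v ϖ := by rw [g1]; exact GSp4.v_mul_le_left v (hint 0 0)
  have hva01 : v (A 0 1) ≤ v ϖ := by rw [g2]; exact GSp4.v_mul_le_left v (hint 0 2)
  have hva10 : v (A 1 0) ≤ v ϖ := by rw [g3, v.map_neg]; exact GSp4.v_mul_le_left v (hint 1 0)
  have hva11 : v (A 1 1) ≤ v ϖ := by rw [g4, v.map_neg]; exact GSp4.v_mul_le_left v (hint 1 2)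
  have hvb00 : v (B 0 0) ≤ v ϖ := by rw [g5]; exact GSp4.v_mul_le_left v (hint 1 1)
  have hvb01 : v (B 0 1) ≤ v ϖ := by rw [g6]; exact GSp4.v_mul_le_left v (hint 1 3)
  have hvb10 : v (B 1 0) ≤ v ϖ := by rw [g7, v.map_neg]; exact GSp4.v_mul_le_left v (hint 0 1)
  have hvb11 : v (B 1 1) ≤ v ϖ := by rw [g8, v.map_neg]; exact GSp4.v_mul_le_left v (hint 0 3)
  have hvA : v A.det ≤ v ϖ * v ϖ := by
    rw [Matrix.det_fin_two]
    refine GSp4.v_sub_le v ?_ ?_ <;> rw [v.map_mul]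
    · exact mul_le_mul' hva00 hva11
    · exact mul_le_mul' hva01 hva10
  have hvB : v B.det ≤ v ϖ * v ϖ := by
    rw [Matrix.det_fin_two]
    refine GSp4.v_sub_le v ?_ ?_ <;> rw [v.map_mul]
    · exact mul_le_mul' hvb00 hvb11
    · exact mul_le_mul' hvb01 hvb10
  have hdetv : v A.det * v B.det = v ϖ * v ϖ := by
    have h9 := congrArg Matrix.det heq
    rw [GSp4.det_embedPair, Matrix.det_mul, GSp4.det_tau] at h9
    have h10 := congrArg v h9
    rw [v.map_mul, v.map_mul, v.map_mul, hdetk, mul_one] at h10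
    exact h10
  have hle : v A.det * v B.det ≤ (v ϖ * v ϖ) * (v ϖ * v ϖ) := mul_le_mul' hvA hvB
  rw [hdetv, hϖ] at hle
  exact GSp4.pi_sq_not_le hle

end GSp4Aux4

open Matrix in
/-- For `G = GSp₄(F)`, `K = GSp₄(O_F)`, `H = GL₂ ×_det GL₂` and
`τ₁ = [[ϖ,0,0,1],[0,ϖ,1,0],[0,0,1,0],[0,0,0,1]]`: the group `H ∩ τ₁Kτ₁⁻¹` equals `X°·J`,
where `X°` is the image of `GL₂(O_F)` under `h ↦ (h, shs)` and `J` is the subgroup of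
`H ∩ τ₁Kτ₁⁻¹` reducing mod `ϖ` into the diagonal torus; moreover `H ∩ τ₁Kτ₁⁻¹ ⊊ U = H ∩ K`
and consequently `HK` and `Hτ₁K` are disjoint. -/
theorem gsp4_H_tau_structure
    {F : Type*} [Field F] (v : Valuation F (WithZero (Multiplicative ℤ)))
    (ϖ : F) (hϖ : v ϖ = ((Multiplicative.ofAdd (-1 : ℤ) : Multiplicative ℤ) :
      WithZero (Multiplicative ℤ))) :
    ({m ∈ HSet F | ∃ k ∈ KSet F v, m * tauOne ϖ = tauOne ϖ * k} =
      {m | ∃ h : Matrix (Fin 2) (Fin 2) F, (∀ i j, v (h i j) ≤ 1) ∧ v h.det = 1 ∧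
          m = embedPair h (!![0, 1; 1, 0] * h * !![0, 1; 1, 0])} *
        {m ∈ {m ∈ HSet F | ∃ k ∈ KSet F v, m * tauOne ϖ = tauOne ϖ * k} |
          ∀ i j, i ≠ j → v (m i j) ≤ ((Multiplicative.ofAdd (-1 : ℤ) : Multiplicative ℤ) :
            WithZero (Multiplicative ℤ))}) ∧
    ({m ∈ HSet F | ∃ k ∈ KSet F v, m * tauOne ϖ = tauOne ϖ * k} ⊆ HSet F ∩ KSet F v) ∧
    ({m ∈ HSet F | ∃ k ∈ KSet F v, m * tauOne ϖ = tauOne ϖ * k} ≠ HSet F ∩ KSet F v) ∧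
    Disjoint (HSet F * KSet F v) (HSet F * {tauOne ϖ} * KSet F v) := by
  have hϖ0 : ϖ ≠ 0 := by
    intro h
    rw [h, map_zero] at hϖ
    exact GSp4.pi_ne_zero hϖ.symm
  have hϖ1 : v ϖ ≤ 1 := by rw [hϖ]; exact GSp4.pi_le_one
  have hd2 : ∀ A : Matrix (Fin 2) (Fin 2) F, A.det = A 0 0 * A 1 1 - A 0 1 * A 1 0 :=
    Matrix.det_fin_two
  refine ⟨?_, ?_, ?_, ?_⟩
  -- ==================== Part 1: the product decomposition ====================
  · apply Set.Subset.antisymm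
    · -- LHS ⊆ X° * J
      rintro m ⟨hmH, k, hkK, heq⟩
      obtain ⟨A, B, hdet, hne, rfl⟩ := hmH
      obtain ⟨hA, hB, -, hvdet, c1, c2, c3, c4⟩ := GSp4.S_to v hϖ0 hϖ1 hdet hkK heq
      have hdAne : A.det ≠ 0 := GSp4.ne_zero_of_v_eq_one v hvdet
      have hdne : A 0 0 * A 1 1 - A 0 1 * A 1 0 ≠ 0 := by rw [← hd2]; exact hdAne
      have hvd : v (A 0 0 * A 1 1 - A 0 1 * A 1 0) = 1 := by rw [← hd2]; exact hvdet
      set C : Matrix (Fin 2) (Fin 2) F :=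
        !![(A 0 0 * B 0 0 - A 1 0 * B 1 0) / (A 0 0 * A 1 1 - A 0 1 * A 1 0),
           (A 0 0 * B 0 1 - A 1 0 * B 1 1) / (A 0 0 * A 1 1 - A 0 1 * A 1 0);
           (A 1 1 * B 1 0 - A 0 1 * B 0 0) / (A 0 0 * A 1 1 - A 0 1 * A 1 0),
           (A 1 1 * B 1 1 - A 0 1 * B 0 1) / (A 0 0 * A 1 1 - A 0 1 * A 1 0)] with hC
      have hC00 : C 0 0 = (A 0 0 * B 0 0 - A 1 0 * B 1 0) / (A 0 0 * A 1 1 - A 0 1 * A 1 0) := rfl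
      have hC01 : C 0 1 = (A 0 0 * B 0 1 - A 1 0 * B 1 1) / (A 0 0 * A 1 1 - A 0 1 * A 1 0) := rfl
      have hC10 : C 1 0 = (A 1 1 * B 1 0 - A 0 1 * B 0 0) / (A 0 0 * A 1 1 - A 0 1 * A 1 0) := rfl
      have hC11 : C 1 1 = (A 1 1 * B 1 1 - A 0 1 * B 0 1) / (A 0 0 * A 1 1 - A 0 1 * A 1 0) := rfl
      have hvC : ∀ i j, v (C i j) ≤ 1 := by
        intro i j
        fin_cases i <;> fin_cases j <;>
          [(show v (C 0 0) ≤ 1; rw [hC00]); (show v (C 0 1) ≤ 1; rw [hC01]);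
           (show v (C 1 0) ≤ 1; rw [hC10]); (show v (C 1 1) ≤ 1; rw [hC11])] <;>
          rw [map_div₀, hvd, div_one] <;>
          exact GSp4.v_sub_le v (GSp4.v_mul_le_one v (hA _ _) (hB _ _))
            (GSp4.v_mul_le_one v (hA _ _) (hB _ _))
      have hcg1 : v ((1 : Matrix (Fin 2) (Fin 2) F) 0 1 - C 1 0) ≤ v ϖ := by
        have e : (1 : Matrix (Fin 2) (Fin 2) F) 0 1 - C 1 0 =
            (A 1 1 * (A 0 1 - B 1 0) + A 0 1 * (B 0 0 - A 1 1)) /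
              (A 0 0 * A 1 1 - A 0 1 * A 1 0) := by
          rw [hC10, Matrix.one_apply_ne (by decide)]
          field_simp
          ring
        rw [e, map_div₀, hvd, div_one]
        exact GSp4.v_add_le v (GSp4.v_mul_le v (hA 1 1) c1) (GSp4.v_mul_le v (hA 0 1) c3)
      have hcg2 : v ((1 : Matrix (Fin 2) (Fin 2) F) 0 0 - C 1 1) ≤ v ϖ := by
        have e : (1 : Matrix (Fin 2) (Fin 2) F) 0 0 - C 1 1 =
            (A 1 1 * (A 0 0 - B 1 1) + A 0 1 * (B 0 1 - A 1 0)) /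
              (A 0 0 * A 1 1 - A 0 1 * A 1 0) := by
          rw [hC11, Matrix.one_apply_eq]
          rw [eq_div_iff hdne, sub_mul, div_mul_cancel₀ _ hdne]
          ring
        rw [e, map_div₀, hvd, div_one]
        exact GSp4.v_add_le v (GSp4.v_mul_le v (hA 1 1) c2) (GSp4.v_mul_le v (hA 0 1) c4)
      have hcg3 : v (C 0 0 - (1 : Matrix (Fin 2) (Fin 2) F) 1 1) ≤ v ϖ := by
        have e : C 0 0 - (1 : Matrix (Fin 2) (Fin 2) F) 1 1 =
            (A 0 0 * (B 0 0 - A 1 1) + A 1 0 * (A 0 1 - B 1 0)) /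
              (A 0 0 * A 1 1 - A 0 1 * A 1 0) := by
          rw [hC00, Matrix.one_apply_eq]
          rw [eq_div_iff hdne, sub_mul, div_mul_cancel₀ _ hdne]
          ring
        rw [e, map_div₀, hvd, div_one]
        exact GSp4.v_add_le v (GSp4.v_mul_le v (hA 0 0) c3) (GSp4.v_mul_le v (hA 1 0) c1)
      have hcg4 : v (C 0 1 - (1 : Matrix (Fin 2) (Fin 2) F) 1 0) ≤ v ϖ := by
        have e : C 0 1 - (1 : Matrix (Fin 2) (Fin 2) F) 1 0 =
            (A 0 0 * (B 0 1 - A 1 0) + A 1 0 * (A 0 0 - B 1 1)) /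
              (A 0 0 * A 1 1 - A 0 1 * A 1 0) := by
          rw [hC01, Matrix.one_apply_ne (by decide)]
          field_simp
          ring
        rw [e, map_div₀, hvd, div_one]
        exact GSp4.v_add_le v (GSp4.v_mul_le v (hA 0 0) c4) (GSp4.v_mul_le v (hA 1 0) c2)
      have hdet2 : A 0 0 * A 1 1 - A 0 1 * A 1 0 = B 0 0 * B 1 1 - B 0 1 * B 1 0 := by
        rw [← hd2, ← hd2]; exact hdet
      have hnum : (A 0 0 * B 0 0 - A 1 0 * B 1 0) * (A 1 1 * B 1 1 - A 0 1 * B 0 1) -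
          (A 0 0 * B 0 1 - A 1 0 * B 1 1) * (A 1 1 * B 1 0 - A 0 1 * B 0 0) =
          (A 0 0 * A 1 1 - A 0 1 * A 1 0) * (A 0 0 * A 1 1 - A 0 1 * A 1 0) := by
        linear_combination (-(A 0 0 * A 1 1 - A 0 1 * A 1 0)) * hdet2
      have hCdet : C.det = 1 := by
        rw [hd2 C, hC00, hC01, hC10, hC11, div_mul_div_comm, div_mul_div_comm,
          div_sub_div_same, hnum, div_self (mul_ne_zero hdne hdne)]
      have hCscond : GSp4.SCond v ϖ (1 : Matrix (Fin 2) (Fin 2) F) C := by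
        refine ⟨?_, hvC, ?_, ?_, hcg1, hcg2, hcg3, hcg4⟩
        · intro i j
          rcases eq_or_ne i j with h | h
          · rw [h, Matrix.one_apply_eq, v.map_one]
          · rw [Matrix.one_apply_ne h, v.map_zero]; exact zero_le'
        · rw [Matrix.det_one, hCdet]
        · rw [Matrix.det_one, v.map_one]
      obtain ⟨hjH, hjK⟩ := GSp4.S_from v hϖ0 hϖ1 hCscond
      have hsC : (!![0, 1; 1, 0] * A * !![0, 1; 1, 0]) * C = B := by
        have hdne' : A 1 1 * A 0 0 - A 1 0 * A 0 1 ≠ 0 := by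
          rw [mul_comm (A 1 1), mul_comm (A 1 0)]; exact hdne
        ext i j
        fin_cases i <;> fin_cases j <;>
          (try simp [hC00, hC01, hC10, hC11, Matrix.mul_apply, Matrix.vecMul, dotProduct,
            Fin.sum_univ_two, Matrix.vecHead, Matrix.vecTail]) <;>
          (try field_simp [hdne']) <;> (try ring)
      rw [Set.mem_mul]
      refine ⟨embedPair A (!![0, 1; 1, 0] * A * !![0, 1; 1, 0]), ⟨A, hA, hvdet, rfl⟩,
        embedPair 1 C, ⟨⟨hjH, hjK⟩, ?_⟩, ?_⟩
      · -- off-diagonal condition for the J-factor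
        intro i j hij
        fin_cases i <;> fin_cases j <;> (try simp at hij) <;>
          first
            | (show v (0 : F) ≤ _; rw [v.map_zero]; exact zero_le')
            | (show v (C 0 1) ≤ _
               rw [← hϖ]
               have := hcg4
               rwa [show (1 : Matrix (Fin 2) (Fin 2) F) 1 0 = 0 from
                 Matrix.one_apply_ne (by decide), sub_zero] at this)
            | (show v (C 1 0) ≤ _
               rw [← hϖ]
               have := hcg1
               rwa [show (1 : Matrix (Fin 2) (Fin 2) F) 0 1 = 0 from
                 Matrix.one_apply_ne (by decide), zero_sub, v.map_neg] at this)
      · rw [GSp4.embedPair_mul, mul_one, hsC]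
    · -- X° * J ⊆ LHS
      intro m hm
      rw [Set.mem_mul] at hm
      obtain ⟨x, ⟨h, hh1, hh2, rfl⟩, jm, ⟨⟨hjH, hjK⟩, -⟩, rfl⟩ := hm
      have hxS : embedPair h (!![0, 1; 1, 0] * h * !![0, 1; 1, 0]) ∈ HSet F ∧
          ∃ k ∈ KSet F v,
            embedPair h (!![0, 1; 1, 0] * h * !![0, 1; 1, 0]) * tauOne ϖ = tauOne ϖ * k := by
        have hs00 : (!![0, 1; 1, 0] * h * !![0, 1; 1, 0] : Matrix (Fin 2) (Fin 2) F) 0 0 = h 1 1 := by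
          simp [Matrix.mul_apply, Matrix.vecMul, dotProduct, Fin.sum_univ_two,
            Matrix.vecHead, Matrix.vecTail]
        have hs01 : (!![0, 1; 1, 0] * h * !![0, 1; 1, 0] : Matrix (Fin 2) (Fin 2) F) 0 1 = h 1 0 := by
          simp [Matrix.mul_apply, Matrix.vecMul, dotProduct, Fin.sum_univ_two,
            Matrix.vecHead, Matrix.vecTail]
        have hs10 : (!![0, 1; 1, 0] * h * !![0, 1; 1, 0] : Matrix (Fin 2) (Fin 2) F) 1 0 = h 0 1 := by
          simp [Matrix.mul_apply, Matrix.vecMul, dotProduct, Fin.sum_univ_two,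
            Matrix.vecHead, Matrix.vecTail]
        have hs11 : (!![0, 1; 1, 0] * h * !![0, 1; 1, 0] : Matrix (Fin 2) (Fin 2) F) 1 1 = h 0 0 := by
          simp [Matrix.mul_apply, Matrix.vecMul, dotProduct, Fin.sum_univ_two,
            Matrix.vecHead, Matrix.vecTail]
        refine GSp4.S_from v hϖ0 hϖ1 ⟨hh1, ?_, ?_, hh2, ?_, ?_, ?_, ?_⟩
        · intro i j
          fin_cases i <;> fin_cases j <;>
            [(show v ((!![0, 1; 1, 0] * h * !![0, 1; 1, 0] : Matrix (Fin 2) (Fin 2) F) 0 0) ≤ 1; rw [hs00]);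
             (show v ((!![0, 1; 1, 0] * h * !![0, 1; 1, 0] : Matrix (Fin 2) (Fin 2) F) 0 1) ≤ 1; rw [hs01]);
             (show v ((!![0, 1; 1, 0] * h * !![0, 1; 1, 0] : Matrix (Fin 2) (Fin 2) F) 1 0) ≤ 1; rw [hs10]);
             (show v ((!![0, 1; 1, 0] * h * !![0, 1; 1, 0] : Matrix (Fin 2) (Fin 2) F) 1 1) ≤ 1; rw [hs11])] <;>
            exact hh1 _ _
        · rw [Matrix.det_mul, Matrix.det_mul,
            show (!![0, 1; 1, 0] : Matrix (Fin 2) (Fin 2) F).det = -1 from by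
              simp [Matrix.det_fin_two]]
          ring
        · rw [hs10, sub_self, v.map_zero]; exact zero_le'
        · rw [hs11, sub_self, v.map_zero]; exact zero_le'
        · rw [hs00, sub_self, v.map_zero]; exact zero_le'
        · rw [hs01, sub_self, v.map_zero]; exact zero_le'
      exact GSp4.S_mul v hxS ⟨hjH, hjK⟩
  -- ==================== Part 2: LHS ⊆ H ∩ K ====================
  · rintro m ⟨hmH, k, hkK, heq⟩
    obtain ⟨A, B, hdet, hne, rfl⟩ := hmH
    obtain ⟨hA, hB, -, hvdet, -, -, -, -⟩ := GSp4.S_to v hϖ0 hϖ1 hdet hkK heq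
    refine ⟨⟨A, B, hdet, hne, rfl⟩, ⟨A.det, hne, GSp4.embed_J A B hdet⟩, ?_, ?_⟩
    · intro i j
      fin_cases i <;> fin_cases j
      · exact hA 0 0
      · show v (0 : F) ≤ 1; rw [v.map_zero]; exact zero_le'
      · exact hA 0 1
      · show v (0 : F) ≤ 1; rw [v.map_zero]; exact zero_le'
      · show v (0 : F) ≤ 1; rw [v.map_zero]; exact zero_le'
      · exact hB 0 0
      · show v (0 : F) ≤ 1; rw [v.map_zero]; exact zero_le'
      · exact hB 0 1
      · exact hA 1 0
      · show v (0 : F) ≤ 1; rw [v.map_zero]; exact zero_le'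
      · exact hA 1 1
      · show v (0 : F) ≤ 1; rw [v.map_zero]; exact zero_le'
      · show v (0 : F) ≤ 1; rw [v.map_zero]; exact zero_le'
      · exact hB 1 0
      · show v (0 : F) ≤ 1; rw [v.map_zero]; exact zero_le'
      · exact hB 1 1
    · rw [GSp4.det_embedPair, ← hdet, v.map_mul, hvdet, one_mul]
  -- ==================== Part 3: LHS ≠ H ∩ K ====================
  · intro hEq
    have hdm0 : (!![0, 1; -1, 0] : Matrix (Fin 2) (Fin 2) F).det = 1 := by
      simp [Matrix.det_fin_two]
    have hm₀HK : embedPair !![0, 1; -1, 0] (1 : Matrix (Fin 2) (Fin 2) F) ∈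
        HSet F ∩ KSet F v := by
      refine ⟨⟨!![0, 1; -1, 0], 1, by rw [hdm0, Matrix.det_one], by rw [hdm0]; exact one_ne_zero,
        rfl⟩, ⟨1, one_ne_zero, ?_⟩, ?_, ?_⟩
      · have hgj := GSp4.embed_J !![0, 1; -1, 0] (1 : Matrix (Fin 2) (Fin 2) F)
          (by rw [hdm0, Matrix.det_one])
        rw [hdm0, one_smul] at hgj
        rw [one_smul]
        exact hgj
      · intro i j
        fin_cases i <;> fin_cases j <;>
          first
            | (show v (0 : F) ≤ 1; rw [v.map_zero]; exact zero_le')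
            | (show v (1 : F) ≤ 1; rw [v.map_one])
            | (show v (-1 : F) ≤ 1; rw [v.map_neg, v.map_one])
      · rw [GSp4.det_embedPair, hdm0, Matrix.det_one, one_mul, v.map_one]
    rw [← hEq] at hm₀HK
    obtain ⟨hH', k, hkK, heq⟩ := hm₀HK
    obtain ⟨A, B, hdet, hAn, hEm⟩ := hH'
    rw [hEm] at heq
    obtain ⟨-, -, -, -, -, c2, -, -⟩ := GSp4.S_to v hϖ0 hϖ1 hdet hkK heq
    have E : ∀ i j, embedPair !![(0 : F), 1; -1, 0] (1 : Matrix (Fin 2) (Fin 2) F) i j =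
        embedPair A B i j := fun i j => by rw [hEm]
    have h1 : (0 : F) = A 0 0 := E 0 0
    have h2 : (1 : F) = B 1 1 := E 3 3
    rw [← h1, ← h2, zero_sub, v.map_neg, v.map_one, hϖ] at c2
    exact GSp4.not_one_le_pi c2
  -- ==================== Part 4: disjointness ====================
  · rw [Set.disjoint_left]
    intro x hx1 hx2
    rw [Set.mem_mul] at hx1 hx2
    obtain ⟨h1, hh1, k1, hk1, hxeq⟩ := hx1
    obtain ⟨y, hy, k2, hk2, hxeq2⟩ := hx2
    rw [Set.mem_mul] at hy
    obtain ⟨h2, hh2, t, ht, hyeq⟩ := hy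
    rw [Set.mem_singleton_iff] at ht
    subst ht
    obtain ⟨g2, hg2H, hg2inv⟩ := GSp4.H_inv hh2
    obtain ⟨k1', hk1'K, hk1r, hk1l⟩ := GSp4.K_inv v hk1
    have h6 : h1 * k1 = h2 * (tauOne ϖ * k2) := by
      rw [hxeq, ← hxeq2, ← hyeq]
      simp only [Matrix.mul_assoc]
    have key : g2 * h1 = tauOne ϖ * (k2 * k1') := by
      calc g2 * h1 = g2 * h1 * (k1 * k1') := by rw [hk1r, Matrix.mul_one]
        _ = g2 * (h1 * k1) * k1' := by simp only [Matrix.mul_assoc]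
        _ = g2 * (h2 * (tauOne ϖ * k2)) * k1' := by rw [h6]
        _ = (g2 * h2) * (tauOne ϖ * (k2 * k1')) := by simp only [Matrix.mul_assoc]
        _ = tauOne ϖ * (k2 * k1') := by rw [hg2inv, Matrix.one_mul]
    exact GSp4.not_H_tauK v hϖ (GSp4.H_mul hg2H hh1) (GSp4.K_mul v hk2 hk1'K) key
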